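/- arXiv:2409.18632 — 3 statements merged into one kernel-verified Lean document; each statement's English description precedes it below -/
import Mathlib

section
/- Let (D_k) be a nonnegative real sequence satisfying D_{k+1} ≤ (1 − φ)D_k + ϑ θ²/(k + k₀)² for all k ≥ 0, where φ ∈ (0,1), ϑ, θ ≥ 0, and k₀ > 2/φ. Then there is a constant ι ≥ (1 + 1/k₀)² such that for all k ≥ 0, D_k ≤ (1 − φ)^k D_0 + (2ι ϑ θ²/φ) · 1/(k + k₀)². -/
theorem stmt5 (D : ℕ → ℝ) (φ ϑ θ k₀ : ℝ)
    (hD : ∀ k, 0 ≤ D k) (hφ : φ ∈ Set.Ioo (0:ℝ) 1) (hϑ : 0 ≤ ϑ) (hθ : 0 ≤ θ)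
    (hk₀ : k₀ > 2 / φ)
    (hrec : ∀ k : ℕ, D (k + 1) ≤ (1 - φ) * D k + ϑ * θ ^ 2 / ((k : ℝ) + k₀) ^ 2) :
    ∃ ι : ℝ, ι ≥ (1 + 1 / k₀) ^ 2 ∧
      ∀ k : ℕ, D k ≤ (1 - φ) ^ k * D 0 + (2 * ι * ϑ * θ ^ 2 / φ) * (1 / ((k : ℝ) + k₀) ^ 2) := by
  obtain ⟨hφ0, hφ1⟩ := hφ
  have h2φ : (2:ℝ) < 2 / φ := by
    rw [lt_div_iff₀ hφ0]; nlinarith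
  have hk2 : (2:ℝ) < k₀ := lt_trans h2φ hk₀
  have hk0pos : (0:ℝ) < k₀ := by linarith
  set ρ := (1 + 1/k₀)^2 with hρ
  have hρ1 : (1:ℝ) ≤ ρ := by
    have : (0:ℝ) < 1/k₀ := by positivity
    nlinarith
  have hinv : 1/k₀ < φ/2 := by
    rw [div_lt_div_iff₀ hk0pos (by norm_num : (0:ℝ) < 2)]
    have := (div_lt_iff₀ hφ0).mp hk₀
    linarith
  have hδ : 0 < 1 - ρ*(1-φ) := by
    have h1 : ρ < (1 + φ/2)^2 := by
      have h0 : (0:ℝ) < 1/k₀ := by positivity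
      rw [hρ]; nlinarith
    have h2 : ρ*(1-φ) < (1+φ/2)^2*(1-φ) := mul_lt_mul_of_pos_right h1 (by linarith)
    nlinarith [sq_nonneg φ, mul_pos (mul_pos hφ0 hφ0) hφ0]
  set δ := 1 - ρ*(1-φ) with hδdef
  have hρ0 : (0:ℝ) < ρ := by linarith
  set ι := max ρ (ρ*φ/(2*δ)) with hι
  have hιρ : ρ ≤ ι := le_max_left _ _
  have hι0 : 0 < ι := lt_of_lt_of_le hρ0 hιρ
  refine ⟨ι, hιρ, ?_⟩
  set C := 2*ι*ϑ*θ^2/φ with hC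
  have hC0 : 0 ≤ C := by positivity
  have hkey : ρ*(ϑ*θ^2) ≤ C*δ := by
    have h2 : ρ*φ/(2*δ) ≤ ι := le_max_right _ _
    have h3 : ρ*φ ≤ 2*δ*ι := by
      rw [div_le_iff₀ (by positivity)] at h2; linarith
    have h4 : ρ*φ*(ϑ*θ^2) ≤ 2*δ*ι*(ϑ*θ^2) := by nlinarith [mul_nonneg hϑ (sq_nonneg θ)]
    rw [hC]
    rw [div_mul_eq_mul_div, le_div_iff₀ hφ0]
    nlinarith
  intro k
  induction k with
  | zero =>
    simp only [pow_zero, one_mul, Nat.cast_zero]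
    have h0 : 0 ≤ C * (1/((0:ℝ)+k₀)^2) := by positivity
    linarith
  | succ k ih =>
    have hden : (0:ℝ) < (k:ℝ) + k₀ := by positivity
    have hden1 : (0:ℝ) < (k:ℝ) + 1 + k₀ := by positivity
    have hr : ((k:ℝ)+1+k₀)^2 ≤ ρ*((k:ℝ)+k₀)^2 := by
      have h1 : (k:ℝ)+1+k₀ ≤ (1+1/k₀)*((k:ℝ)+k₀) := by
        have : 1 ≤ ((k:ℝ)+k₀)/k₀ := by
          rw [le_div_iff₀ hk0pos]
          have : (0:ℝ) ≤ (k:ℝ) := Nat.cast_nonneg k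
          linarith
        have h2 : (1+1/k₀)*((k:ℝ)+k₀) = (k:ℝ)+k₀ + ((k:ℝ)+k₀)/k₀ := by
          field_simp
        rw [h2]; linarith
      rw [hρ]
      calc ((k:ℝ)+1+k₀)^2 ≤ ((1+1/k₀)*((k:ℝ)+k₀))^2 :=
            pow_le_pow_left₀ hden1.le h1 2
        _ = (1+1/k₀)^2 * ((k:ℝ)+k₀)^2 := by ring
    have h1 := hrec k
    have hstep : (1-φ)*C/((k:ℝ)+k₀)^2 + ϑ*θ^2/((k:ℝ)+k₀)^2 ≤ C/((k:ℝ)+1+k₀)^2 := by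
      rw [← add_div, div_le_div_iff₀ (by positivity) (by positivity)]
      have hnn : 0 ≤ (1-φ)*C + ϑ*θ^2 := by
        have := mul_nonneg hϑ (sq_nonneg θ)
        nlinarith
      calc ((1-φ)*C + ϑ*θ^2) * ((k:ℝ)+1+k₀)^2
          ≤ ((1-φ)*C + ϑ*θ^2) * (ρ*((k:ℝ)+k₀)^2) := by
            exact mul_le_mul_of_nonneg_left hr hnn
        _ = ((1-φ)*ρ*C + ρ*(ϑ*θ^2)) * ((k:ℝ)+k₀)^2 := by ring
        _ ≤ ((1-φ)*ρ*C + C*δ) * ((k:ℝ)+k₀)^2 := by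
            apply mul_le_mul_of_nonneg_right _ (by positivity)
            linarith
        _ = C * ((k:ℝ)+k₀)^2 := by rw [hδdef]; ring
    have hmono : (1-φ) * D k ≤ (1-φ) * ((1-φ)^k * D 0 + C * (1/((k:ℝ)+k₀)^2)) := by
      apply mul_le_mul_of_nonneg_left ih (by linarith)
    push_cast
    calc D (k+1) ≤ (1-φ)*D k + ϑ*θ^2/((k:ℝ)+k₀)^2 := h1
      _ ≤ (1-φ)*((1-φ)^k * D 0 + C * (1/((k:ℝ)+k₀)^2)) + ϑ*θ^2/((k:ℝ)+k₀)^2 := by linarith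
      _ = (1-φ)^(k+1) * D 0 + ((1-φ)*C/((k:ℝ)+k₀)^2 + ϑ*θ^2/((k:ℝ)+k₀)^2) := by ring
      _ ≤ (1-φ)^(k+1) * D 0 + C/((k:ℝ)+1+k₀)^2 := by linarith
      _ = (1-φ)^(k+1) * D 0 + C * (1/((k:ℝ)+1+k₀)^2) := by ring
end

section
/- Suppose the clipping parameter is chosen as τᵢ = sqrt( (∑_{j∈Rᵢ} w_{ij}‖x̃ᵢ − x̃ⱼ‖₂²) / (∑_{j∈Bᵢ} w_{ij}) ) with ∑_{j∈Bᵢ} w_{ij} > 0. Then, writing z̃ⱼ = x̃ᵢ + Clip(x̃ⱼ − x̃ᵢ, τᵢ), the combined error satisfies 2‖∑_{j∈Rᵢ} w_{ij}(z̃ⱼ − x̃ⱼ)‖₂² + 2‖∑_{j∈Bᵢ} w_{ij}(z̃ⱼ − x̃ᵢ)‖₂² ≤ 4 (∑_{b∈Bᵢ} w_{ib}) (∑_{r∈Rᵢ} w_{ir}‖x̃ᵢ − x̃ᵣ‖₂²). -/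
noncomputable def Clip {n : ℕ} (v : EuclideanSpace ℝ (Fin n)) (τ : ℝ) :
    EuclideanSpace ℝ (Fin n) :=
  (min 1 (τ / ‖v‖)) • v

lemma clip_norm_le {n : ℕ} (v : EuclideanSpace ℝ (Fin n)) {τ : ℝ} (hτ : 0 ≤ τ) :
    ‖Clip v τ‖ ≤ τ := by
  unfold Clip
  rcases eq_or_ne v 0 with h | h
  · simp [h, hτ]
  · have hv : 0 < ‖v‖ := norm_pos_iff.mpr h
    have hmin : 0 ≤ min 1 (τ / ‖v‖) := le_min zero_le_one (div_nonneg hτ hv.le)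
    rw [norm_smul, Real.norm_eq_abs, abs_of_nonneg hmin]
    calc min 1 (τ / ‖v‖) * ‖v‖ ≤ (τ / ‖v‖) * ‖v‖ := by
          exact mul_le_mul_of_nonneg_right (min_le_right _ _) hv.le
      _ = τ := div_mul_cancel₀ _ hv.ne'

lemma clip_err {n : ℕ} (v : EuclideanSpace ℝ (Fin n)) {τ : ℝ} (hτ : 0 ≤ τ) :
    ‖Clip v τ - v‖ * τ ≤ ‖v‖ ^ 2 := by
  unfold Clip
  rcases eq_or_ne v 0 with h | h
  · simp [h]
  · have hv : 0 < ‖v‖ := norm_pos_iff.mpr h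
    have hrw : min 1 (τ / ‖v‖) • v - v = (min 1 (τ / ‖v‖) - 1) • v := by
      rw [sub_smul, one_smul]
    rw [hrw, norm_smul, Real.norm_eq_abs,
      abs_of_nonpos (by simp [min_le_left] : min 1 (τ / ‖v‖) - 1 ≤ 0)]
    rcases le_total 1 (τ / ‖v‖) with hc | hc
    · rw [min_eq_left hc]; simp [sq_nonneg]
    · rw [min_eq_right hc]
      have hτv : τ ≤ ‖v‖ := (div_le_one hv).mp hc
      have h1 : 1 - τ / ‖v‖ ≤ 1 := by
        have : 0 ≤ τ / ‖v‖ := div_nonneg hτ hv.le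
        linarith
      have h2 : 0 ≤ 1 - τ / ‖v‖ := by linarith
      have hd : τ / ‖v‖ * ‖v‖ = τ := div_mul_cancel₀ _ hv.ne'
      nlinarith [sq_nonneg (‖v‖ - τ), mul_nonneg hτ hv.le]

theorem stmt11 {n : ℕ} {ι : Type*} (Ri Bi : Finset ι) (hdisj : Disjoint Ri Bi)
    (w : ι → ℝ) (hw : ∀ j, 0 ≤ w j)
    (xti : EuclideanSpace ℝ (Fin n)) (xt : ι → EuclideanSpace ℝ (Fin n))
    (hB : 0 < ∑ j ∈ Bi, w j)
    (τ : ℝ)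
    (hτ : τ = Real.sqrt ((∑ j ∈ Ri, w j * ‖xti - xt j‖ ^ 2) / (∑ j ∈ Bi, w j)))
    (zt : ι → EuclideanSpace ℝ (Fin n))
    (hz : ∀ j, zt j = xti + Clip (xt j - xti) τ) :
    2 * ‖∑ j ∈ Ri, w j • (zt j - xt j)‖ ^ 2 +
      2 * ‖∑ j ∈ Bi, w j • (zt j - xti)‖ ^ 2 ≤
    4 * (∑ b ∈ Bi, w b) * (∑ r ∈ Ri, w r * ‖xti - xt r‖ ^ 2) := by
  set S : ℝ := ∑ j ∈ Ri, w j * ‖xti - xt j‖ ^ 2 with hS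
  set W : ℝ := ∑ j ∈ Bi, w j with hW
  have hSnn : 0 ≤ S :=
    Finset.sum_nonneg fun j _ => mul_nonneg (hw j) (sq_nonneg _)
  have hτnn : 0 ≤ τ := hτ ▸ Real.sqrt_nonneg _
  have hτ2 : τ ^ 2 = S / W := by
    rw [hτ, Real.sq_sqrt (div_nonneg hSnn hB.le)]
  -- Byzantine bound
  have hBb : ‖∑ j ∈ Bi, w j • (zt j - xti)‖ ≤ W * τ := by
    calc ‖∑ j ∈ Bi, w j • (zt j - xti)‖ ≤ ∑ j ∈ Bi, ‖w j • (zt j - xti)‖ :=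
          norm_sum_le _ _
      _ ≤ ∑ j ∈ Bi, w j * τ := by
          apply Finset.sum_le_sum
          intro j _
          rw [norm_smul, Real.norm_eq_abs, abs_of_nonneg (hw j)]
          apply mul_le_mul_of_nonneg_left _ (hw j)
          rw [hz j, add_sub_cancel_left]
          exact clip_norm_le _ hτnn
      _ = W * τ := by rw [← Finset.sum_mul]
  have hBb2 : ‖∑ j ∈ Bi, w j • (zt j - xti)‖ ^ 2 ≤ W * S := by
    have := pow_le_pow_left₀ (norm_nonneg _) hBb 2
    calc ‖∑ j ∈ Bi, w j • (zt j - xti)‖ ^ 2 ≤ (W * τ) ^ 2 := this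
      _ = W * (W * τ ^ 2) := by ring
      _ = W * S := by rw [hτ2, mul_div_cancel₀ _ hB.ne']
  -- Reliable bound
  have hzr : ∀ j, zt j - xt j = Clip (xt j - xti) τ - (xt j - xti) := by
    intro j; rw [hz j]; abel
  have hRb2 : ‖∑ j ∈ Ri, w j • (zt j - xt j)‖ ^ 2 ≤ W * S := by
    rcases eq_or_lt_of_le hSnn with hS0 | hSpos
    · -- S = 0 : each term is zero
      have hzero : ∀ j ∈ Ri, w j • (zt j - xt j) = 0 := by
        intro j hj
        have hterm : w j * ‖xti - xt j‖ ^ 2 = 0 := by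
          have := (Finset.sum_eq_zero_iff_of_nonneg
            (fun j _ => mul_nonneg (hw j) (sq_nonneg _))).mp hS0.symm j hj
          exact this
        rcases mul_eq_zero.mp hterm with h | h
        · rw [h, zero_smul]
        · have : xti - xt j = 0 := by
            have := pow_eq_zero_iff (n := 2) (by norm_num) |>.mp h
            exact norm_eq_zero.mp this
          have hx : xt j = xti := by
            have := sub_eq_zero.mp this; exact this.symm
          rw [hzr j, hx, sub_self]
          unfold Clip
          simp
      rw [Finset.sum_eq_zero hzero]
      simpa using mul_nonneg hB.le hSnn
    · -- S > 0, hence τ > 0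
      have hτpos : 0 < τ := by
        rw [hτ]; exact Real.sqrt_pos.mpr (div_pos hSpos hB)
      have hA : ‖∑ j ∈ Ri, w j • (zt j - xt j)‖ * τ ≤ S := by
        calc ‖∑ j ∈ Ri, w j • (zt j - xt j)‖ * τ
            ≤ (∑ j ∈ Ri, ‖w j • (zt j - xt j)‖) * τ :=
              mul_le_mul_of_nonneg_right (norm_sum_le _ _) hτnn
          _ = ∑ j ∈ Ri, ‖w j • (zt j - xt j)‖ * τ := Finset.sum_mul ..
          _ ≤ ∑ j ∈ Ri, w j * ‖xti - xt j‖ ^ 2 := by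
              apply Finset.sum_le_sum
              intro j _
              rw [norm_smul, Real.norm_eq_abs, abs_of_nonneg (hw j), mul_assoc]
              apply mul_le_mul_of_nonneg_left _ (hw j)
              rw [hzr j, norm_sub_rev xti (xt j)]
              exact clip_err _ hτnn
      have hA2 : (‖∑ j ∈ Ri, w j • (zt j - xt j)‖ * τ) ^ 2 ≤ S ^ 2 :=
        pow_le_pow_left₀ (mul_nonneg (norm_nonneg _) hτnn) hA 2
      have hτ2pos : 0 < τ ^ 2 := pow_pos hτpos 2
      rw [mul_pow] at hA2
      have : ‖∑ j ∈ Ri, w j • (zt j - xt j)‖ ^ 2 ≤ S ^ 2 / τ ^ 2 :=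
        (le_div_iff₀ hτ2pos).mpr hA2
      calc ‖∑ j ∈ Ri, w j • (zt j - xt j)‖ ^ 2 ≤ S ^ 2 / τ ^ 2 := this
        _ = W * S := by
            rw [hτ2]
            field_simp
  nlinarith [hBb2, hRb2]
end

section
/- Consider the noisy gradient step x̃ᵢ = xᵢ − α(gᵢ + nᵢ) for each i in a finite index set R, where nᵢ are independent mean-zero random vectors in R^n with E‖nᵢ‖₂² ≤ nϖ². Let x̄ = (1/|R|)∑ᵢ xᵢ and x̂ = (1/|R|)∑ᵢ x̃ᵢ. Then for any η ∈ (0,1), ∑_{i∈R} E‖x̃ᵢ − x̂‖₂² ≤ (1/(1−η)) ∑_{i∈R} E‖xᵢ − x̄‖₂² + (2α²/η) ∑_{i∈R} E‖gᵢ − (1/|R|)∑_{j∈R} gⱼ‖₂² + (2 n |R| ϖ² α²/η). -/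
open MeasureTheory

lemma young_sq {E : Type*} [SeminormedAddGroup E] (a b : E) {η : ℝ} (h0 : 0 < η) (h1 : η < 1) :
    ‖a + b‖ ^ 2 ≤ ‖a‖ ^ 2 / (1 - η) + ‖b‖ ^ 2 / η := by
  have h := norm_add_le a b
  have ha := norm_nonneg a
  have hb := norm_nonneg b
  have h1' : 0 < 1 - η := by linarith
  rw [div_add_div _ _ h1'.ne' h0.ne', le_div_iff₀ (by positivity)]
  have hs : ‖a + b‖ ^ 2 ≤ (‖a‖ + ‖b‖) ^ 2 := pow_le_pow_left₀ (norm_nonneg _) h 2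
  nlinarith [hs, sq_nonneg (η * ‖a‖ - (1 - η) * ‖b‖), mul_pos (by linarith : (0:ℝ) < 1 - η) h0]

lemma two_sq {E : Type*} [SeminormedAddGroup E] (a b : E) :
    ‖a + b‖ ^ 2 ≤ 2 * ‖a‖ ^ 2 + 2 * ‖b‖ ^ 2 := by
  have h := norm_add_le a b
  nlinarith [sq_nonneg (‖a‖ - ‖b‖), mul_le_mul h h (norm_nonneg _) (by positivity)]

lemma sum_centered_le {E : Type*} [NormedAddCommGroup E] [InnerProductSpace ℝ E] {m : ℕ}
    (v : Fin m → E) :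
    ∑ i, ‖v i - (m : ℝ)⁻¹ • ∑ j, v j‖ ^ 2 ≤ ∑ i, ‖v i‖ ^ 2 := by
  rcases Nat.eq_zero_or_pos m with hm | hm
  · subst hm; simp
  have hm' : (m : ℝ) ≠ 0 := Nat.cast_ne_zero.mpr hm.ne'
  set c : E := (m : ℝ)⁻¹ • ∑ j, v j with hc
  have hsum : ∑ j, v j = (m : ℝ) • c := by rw [hc, smul_inv_smul₀ hm']
  have key : ∑ i, ‖v i - c‖ ^ 2 = (∑ i, ‖v i‖ ^ 2) - (m : ℝ) * ‖c‖ ^ 2 := by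
    have e : ∀ i : Fin m, ‖v i - c‖ ^ 2 = ‖v i‖ ^ 2 - 2 * (inner ℝ (v i) c : ℝ) + ‖c‖ ^ 2 :=
      fun i => norm_sub_sq_real (v i) c
    have hb : ∑ i, (inner ℝ (v i) c : ℝ) = (m : ℝ) * ‖c‖ ^ 2 := by
      rw [← sum_inner, hsum, real_inner_smul_left, real_inner_self_eq_norm_sq]
    rw [Finset.sum_congr rfl fun i _ => e i, Finset.sum_add_distrib, Finset.sum_sub_distrib,
      ← Finset.mul_sum, hb, Finset.sum_const, Finset.card_univ, Fintype.card_fin, nsmul_eq_mul]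
    ring
  have hpos : 0 ≤ (m : ℝ) * ‖c‖ ^ 2 := by positivity
  linarith

theorem stmt18 {Ω : Type*} [MeasureSpace Ω] (μ : Measure Ω) [IsProbabilityMeasure μ]
    {n m : ℕ} (hm : 0 < m)
    (x g : Fin m → EuclideanSpace ℝ (Fin n))
    (noise : Fin m → Ω → EuclideanSpace ℝ (Fin n))
    (hmem : ∀ i, MemLp (noise i) 2 μ)
    (hindep : ProbabilityTheory.iIndepFun noise μ)
    (hmean : ∀ i, ∫ ω, noise i ω ∂μ = 0)
    (ϖ : ℝ) (h2 : ∀ i, ∫ ω, ‖noise i ω‖ ^ 2 ∂μ ≤ (n : ℝ) * ϖ ^ 2)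
    (α η : ℝ) (hα : 0 < α) (hη : η ∈ Set.Ioo (0:ℝ) 1)
    (xt : Fin m → Ω → EuclideanSpace ℝ (Fin n))
    (hxt : ∀ i ω, xt i ω = x i - α • (g i + noise i ω))
    (xbar : EuclideanSpace ℝ (Fin n)) (hxbar : xbar = (m : ℝ)⁻¹ • ∑ i, x i)
    (xhat : Ω → EuclideanSpace ℝ (Fin n)) (hxhat : ∀ ω, xhat ω = (m : ℝ)⁻¹ • ∑ i, xt i ω) :
    ∑ i, ∫ ω, ‖xt i ω - xhat ω‖ ^ 2 ∂μ ≤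
      (1 / (1 - η)) * ∑ i, ‖x i - xbar‖ ^ 2 +
        (2 * α ^ 2 / η) * ∑ i, ‖g i - (m : ℝ)⁻¹ • ∑ j, g j‖ ^ 2 +
        2 * (n : ℝ) * (m : ℝ) * ϖ ^ 2 * α ^ 2 / η := by
  obtain ⟨hη0, hη1⟩ := hη
  have h1η : 0 < 1 - η := by linarith
  set gbar : EuclideanSpace ℝ (Fin n) := (m : ℝ)⁻¹ • ∑ j, g j with hgbar
  set nbar : Ω → EuclideanSpace ℝ (Fin n) := fun ω => (m : ℝ)⁻¹ • ∑ j, noise j ω with hnbar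
  -- decomposition
  have hdiff : ∀ i ω, xt i ω - xhat ω =
      (x i - xbar) + (-α) • ((g i - gbar) + (noise i ω - nbar ω)) := by
    intro i ω
    have hsum : ∑ j, xt j ω = (∑ j, x j) - α • ((∑ j, g j) + (∑ j, noise j ω)) := by
      simp only [hxt]
      rw [Finset.sum_sub_distrib, ← Finset.smul_sum, Finset.sum_add_distrib]
    rw [hxt i ω, hxhat ω, hsum, hxbar]
    simp only [hgbar, hnbar]
    module
  -- Memℒp facts
  have hxtm : ∀ i, MemLp (xt i) 2 μ := by
    intro i
    have : xt i = fun ω => x i - α • (g i + noise i ω) := funext (hxt i)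
    rw [this]
    exact (memLp_const (x i)).sub (((memLp_const (g i)).add (hmem i)).const_smul α)
  have hxhatm : MemLp xhat 2 μ := by
    have : xhat = fun ω => (m : ℝ)⁻¹ • ∑ j, xt j ω := funext hxhat
    rw [this]
    exact (memLp_finset_sum Finset.univ fun j _ => hxtm j).const_smul ((m : ℝ)⁻¹)
  have hnbarm : MemLp nbar 2 μ :=
    (memLp_finset_sum Finset.univ fun j _ => hmem j).const_smul ((m : ℝ)⁻¹)
  have hd : ∀ i, Integrable (fun ω => ‖xt i ω - xhat ω‖ ^ 2) μ :=
    fun i => ((hxtm i).sub hxhatm).norm.integrable_sq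
  have hni : ∀ i, Integrable (fun ω => ‖noise i ω - nbar ω‖ ^ 2) μ :=
    fun i => ((hmem i).sub hnbarm).norm.integrable_sq
  have hnsq : ∀ i, Integrable (fun ω => ‖noise i ω‖ ^ 2) μ :=
    fun i => (hmem i).norm.integrable_sq
  -- pointwise bound
  have pt : ∀ i ω, ‖xt i ω - xhat ω‖ ^ 2 ≤
      (1 / (1 - η)) * ‖x i - xbar‖ ^ 2 + (2 * α ^ 2 / η) * ‖g i - gbar‖ ^ 2 +
        (2 * α ^ 2 / η) * ‖noise i ω - nbar ω‖ ^ 2 := by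
    intro i ω
    rw [hdiff i ω]
    have h1 := young_sq (x i - xbar) ((-α) • ((g i - gbar) + (noise i ω - nbar ω))) hη0 hη1
    have h2 : ‖(-α) • ((g i - gbar) + (noise i ω - nbar ω))‖ ^ 2 =
        α ^ 2 * ‖(g i - gbar) + (noise i ω - nbar ω)‖ ^ 2 := by
      rw [norm_smul]
      rw [Real.norm_eq_abs, abs_neg, abs_of_pos hα]
      ring
    rw [h2] at h1
    have h3 := two_sq (g i - gbar) (noise i ω - nbar ω)
    have h4 : α ^ 2 * ‖(g i - gbar) + (noise i ω - nbar ω)‖ ^ 2 / η ≤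
        α ^ 2 * (2 * ‖g i - gbar‖ ^ 2 + 2 * ‖noise i ω - nbar ω‖ ^ 2) / η := by
      gcongr
    have e1 : (1 / (1 - η)) * ‖x i - xbar‖ ^ 2 = ‖x i - xbar‖ ^ 2 / (1 - η) := by ring
    have e2 : (2 * α ^ 2 / η) * ‖g i - gbar‖ ^ 2 + (2 * α ^ 2 / η) * ‖noise i ω - nbar ω‖ ^ 2 =
        α ^ 2 * (2 * ‖g i - gbar‖ ^ 2 + 2 * ‖noise i ω - nbar ω‖ ^ 2) / η := by ring
    linarith
  -- integrated per-i bound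
  have step1 : ∀ i, ∫ ω, ‖xt i ω - xhat ω‖ ^ 2 ∂μ ≤
      (1 / (1 - η)) * ‖x i - xbar‖ ^ 2 + (2 * α ^ 2 / η) * ‖g i - gbar‖ ^ 2 +
        (2 * α ^ 2 / η) * ∫ ω, ‖noise i ω - nbar ω‖ ^ 2 ∂μ := by
    intro i
    have hInt : Integrable (fun ω => (1 / (1 - η)) * ‖x i - xbar‖ ^ 2 +
        (2 * α ^ 2 / η) * ‖g i - gbar‖ ^ 2 +
        (2 * α ^ 2 / η) * ‖noise i ω - nbar ω‖ ^ 2) μ :=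
      (integrable_const _).add ((hni i).const_mul _)
    have hmono := integral_mono (hd i) hInt (fun ω => pt i ω)
    have hcalc : ∫ ω, ((1 / (1 - η)) * ‖x i - xbar‖ ^ 2 +
        (2 * α ^ 2 / η) * ‖g i - gbar‖ ^ 2 +
        (2 * α ^ 2 / η) * ‖noise i ω - nbar ω‖ ^ 2) ∂μ =
        (1 / (1 - η)) * ‖x i - xbar‖ ^ 2 + (2 * α ^ 2 / η) * ‖g i - gbar‖ ^ 2 +
          (2 * α ^ 2 / η) * ∫ ω, ‖noise i ω - nbar ω‖ ^ 2 ∂μ := by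
      rw [integral_add (integrable_const _) ((hni i).const_mul _), integral_const,
        integral_const_mul]
      simp
    rw [hcalc] at hmono
    exact hmono
  -- bound on noise term
  have hnoise : ∑ i, ∫ ω, ‖noise i ω - nbar ω‖ ^ 2 ∂μ ≤ (n : ℝ) * (m : ℝ) * ϖ ^ 2 := by
    have e1 : ∑ i, ∫ ω, ‖noise i ω - nbar ω‖ ^ 2 ∂μ =
        ∫ ω, ∑ i, ‖noise i ω - nbar ω‖ ^ 2 ∂μ :=
      (integral_finset_sum Finset.univ fun i _ => hni i).symm
    have e2 : ∫ ω, ∑ i, ‖noise i ω‖ ^ 2 ∂μ = ∑ i, ∫ ω, ‖noise i ω‖ ^ 2 ∂μ :=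
      integral_finset_sum Finset.univ fun i _ => hnsq i
    have hmono : ∫ ω, ∑ i, ‖noise i ω - nbar ω‖ ^ 2 ∂μ ≤ ∫ ω, ∑ i, ‖noise i ω‖ ^ 2 ∂μ :=
      integral_mono (integrable_finset_sum _ fun i _ => hni i)
        (integrable_finset_sum _ fun i _ => hnsq i)
        (fun ω => sum_centered_le (fun j => noise j ω))
    have hlast : ∑ i, ∫ ω, ‖noise i ω‖ ^ 2 ∂μ ≤ (n : ℝ) * (m : ℝ) * ϖ ^ 2 := by
      calc ∑ i, ∫ ω, ‖noise i ω‖ ^ 2 ∂μ ≤ ∑ _i : Fin m, (n : ℝ) * ϖ ^ 2 :=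
            Finset.sum_le_sum fun i _ => h2 i
        _ = (n : ℝ) * (m : ℝ) * ϖ ^ 2 := by
            rw [Finset.sum_const, Finset.card_univ, Fintype.card_fin, nsmul_eq_mul]; ring
    calc ∑ i, ∫ ω, ‖noise i ω - nbar ω‖ ^ 2 ∂μ
        ≤ ∫ ω, ∑ i, ‖noise i ω‖ ^ 2 ∂μ := by rw [e1] at *; exact hmono
      _ = ∑ i, ∫ ω, ‖noise i ω‖ ^ 2 ∂μ := e2
      _ ≤ (n : ℝ) * (m : ℝ) * ϖ ^ 2 := hlast
  have hc : (0:ℝ) ≤ 2 * α ^ 2 / η := by positivity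
  calc ∑ i, ∫ ω, ‖xt i ω - xhat ω‖ ^ 2 ∂μ
      ≤ ∑ i, ((1 / (1 - η)) * ‖x i - xbar‖ ^ 2 + (2 * α ^ 2 / η) * ‖g i - gbar‖ ^ 2 +
          (2 * α ^ 2 / η) * ∫ ω, ‖noise i ω - nbar ω‖ ^ 2 ∂μ) :=
        Finset.sum_le_sum fun i _ => step1 i
    _ = (1 / (1 - η)) * ∑ i, ‖x i - xbar‖ ^ 2 + (2 * α ^ 2 / η) * ∑ i, ‖g i - gbar‖ ^ 2 +
          (2 * α ^ 2 / η) * ∑ i, ∫ ω, ‖noise i ω - nbar ω‖ ^ 2 ∂μ := by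
        rw [Finset.sum_add_distrib, Finset.sum_add_distrib, ← Finset.mul_sum, ← Finset.mul_sum,
          ← Finset.mul_sum]
    _ ≤ (1 / (1 - η)) * ∑ i, ‖x i - xbar‖ ^ 2 + (2 * α ^ 2 / η) * ∑ i, ‖g i - gbar‖ ^ 2 +
          (2 * α ^ 2 / η) * ((n : ℝ) * (m : ℝ) * ϖ ^ 2) :=
        add_le_add_right (mul_le_mul_of_nonneg_left hnoise hc) _
    _ = (1 / (1 - η)) * ∑ i, ‖x i - xbar‖ ^ 2 + (2 * α ^ 2 / η) * ∑ i, ‖g i - gbar‖ ^ 2 +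
          2 * (n : ℝ) * (m : ℝ) * ϖ ^ 2 * α ^ 2 / η := by ring
end
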